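/- Let n, S ∈ ℕ, let ℋ = ℓ²({1,…,n}; ℂ^S), and let X be the self-adjoint operator (Xf)(x) = x·f(x). Let H be a self-adjoint operator on ℋ, and suppose there exist α₀ ∈ (0,1] and C₁ > 0 such that ‖e^{αX} H e^{-αX} − H‖ ≤ C₁|α| for all real α with |α| ≤ α₀. Let z ∈ ℂ with dist(z, spec(H)) ≥ δ for some δ > 0. Then for every c with 0 < c ≤ min(α₀, δ/(2C₁)), the S×S matrix-valued kernel of the resolvent satisfies ‖(H−z)^{-1}(x,y)‖ ≤ (2/δ) e^{-c|x−y|} for all x, y ∈ {1,…,n}. -/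

import Mathlib

set_option maxHeartbeats 1000000

noncomputable section

open scoped ComplexOrder

lemma euclidean_apply_le {ι : Type*} [Fintype ι] [DecidableEq ι]
    (v : EuclideanSpace ℂ ι) (i : ι) : ‖v i‖ ≤ ‖v‖ := by
  have h := norm_inner_le_norm (𝕜 := ℂ) (EuclideanSpace.single i (1 : ℂ)) v
  simpa [EuclideanSpace.inner_single_left, EuclideanSpace.norm_single] using h

lemma norm_entry_le_clm_norm {ι : Type*} [Fintype ι] [DecidableEq ι]
    (M : Matrix ι ι ℂ) (i j : ι) :
    ‖M i j‖ ≤ ‖Matrix.toEuclideanCLM (𝕜 := ℂ) M‖ := by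
  have key : (Matrix.toEuclideanCLM (𝕜 := ℂ) M) (EuclideanSpace.single j (1 : ℂ)) =
      (WithLp.equiv 2 _).symm (M.mulVec (Pi.single j 1)) := by
    rfl
  have happ : ((Matrix.toEuclideanCLM (𝕜 := ℂ) M) (EuclideanSpace.single j (1 : ℂ))) i = M i j := by
    rw [key]
    show (M.mulVec (Pi.single j 1)) i = M i j
    rw [Matrix.mulVec_single_one]
    rfl
  calc ‖M i j‖ = ‖((Matrix.toEuclideanCLM (𝕜 := ℂ) M) (EuclideanSpace.single j (1 : ℂ))) i‖ := by
        rw [happ]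
    _ ≤ ‖(Matrix.toEuclideanCLM (𝕜 := ℂ) M) (EuclideanSpace.single j (1 : ℂ))‖ :=
        euclidean_apply_le _ _
    _ ≤ ‖Matrix.toEuclideanCLM (𝕜 := ℂ) M‖ * ‖EuclideanSpace.single j (1 : ℂ)‖ :=
        (Matrix.toEuclideanCLM (𝕜 := ℂ) M).le_opNorm _
    _ = ‖Matrix.toEuclideanCLM (𝕜 := ℂ) M‖ := by
        rw [EuclideanSpace.norm_single, norm_one, mul_one]

lemma aux_inv_bound {A : Type*} [CStarAlgebra A]
    (b : A) (hu : IsUnit b) (hnormal : b * star b = star b * b) (δ : ℝ) (hδ : 0 < δ)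
    (hspec : ∀ w ∈ spectrum ℂ b, δ ≤ ‖w‖) :
    ‖Ring.inverse b‖ ≤ δ⁻¹ := by
  have hru : Ring.inverse b = ((hu.unit⁻¹ : Aˣ) : A) := by
    conv_lhs => rw [← hu.unit_spec]
    rw [Ring.inverse_unit]
  have hrstar : star (Ring.inverse b) = Ring.inverse (star b) := (Ring.inverse_star b).symm
  haveI : IsStarNormal (Ring.inverse b) := by
    constructor
    show star (Ring.inverse b) * Ring.inverse b = Ring.inverse b * star (Ring.inverse b)
    rw [hrstar, ← Ring.mul_inverse_rev' (hnormal : Commute b (star b)),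
      ← Ring.mul_inverse_rev' (hnormal.symm : Commute (star b) b), hnormal]
  have hkey : ∀ μ ∈ spectrum ℂ (Ring.inverse b), ‖μ‖ ≤ δ⁻¹ := by
    intro μ hμ
    rw [hru] at hμ
    have hμ0 : μ ≠ 0 := spectrum.ne_zero_of_mem_of_unit hμ
    have hinv : (μ⁻¹ : ℂ) ∈ spectrum ℂ ((hu.unit : Aˣ) : A) := by
      have := (spectrum.inv_mem_iff (r := Units.mk0 μ hμ0) (a := hu.unit⁻¹)).mp hμ
      simpa using this
    rw [hu.unit_spec] at hinv
    have hdist : δ ≤ ‖μ⁻¹‖ := hspec _ hinv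
    rw [norm_inv] at hdist
    have hμpos : 0 < ‖μ‖ := norm_pos_iff.mpr hμ0
    rw [← inv_inv ‖μ‖]
    exact inv_anti₀ hδ hdist
  have hsr := IsStarNormal.spectralRadius_eq_nnnorm (Ring.inverse b)
  have hsr2 : spectralRadius ℂ (Ring.inverse b) ≤ ENNReal.ofReal δ⁻¹ := by
    rw [spectralRadius]
    refine iSup₂_le fun k hk => ?_
    rw [ENNReal.ofReal]
    exact_mod_cast Real.le_toNNReal_iff_coe_le (by positivity) |>.mpr (by
      rw [coe_nnnorm]; exact hkey k hk)
  rw [hsr] at hsr2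
  rw [ENNReal.ofReal] at hsr2
  have h1 : ‖Ring.inverse b‖₊ ≤ Real.toNNReal δ⁻¹ := by exact_mod_cast hsr2
  have h2 := NNReal.coe_le_coe.mpr h1
  rwa [coe_nnnorm, Real.coe_toNNReal _ (by positivity)] at h2

lemma resolvent_bound {A : Type*} [CStarAlgebra A]
    (a : A) (ha : IsSelfAdjoint a) (z : ℂ) (δ : ℝ) (hδ : 0 < δ)
    (hz : ∀ w ∈ spectrum ℂ a, δ ≤ dist z w) :
    IsUnit (a - z • 1) ∧ ‖Ring.inverse (a - z • 1)‖ ≤ δ⁻¹ := by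
  have hzs : z ∉ spectrum ℂ a := by
    intro h
    have := hz z h
    simp at this
    linarith
  have halg : algebraMap ℂ A z = z • 1 := Algebra.algebraMap_eq_smul_one z
  have hu : IsUnit (a - z • 1) := by
    rw [← halg, ← neg_sub]
    exact (spectrum.notMem_iff.mp hzs).neg
  have hstar : star (a - z • 1) = a - (starRingEnd ℂ z) • 1 := by
    rw [star_sub, star_smul, star_one, ha.star_eq]
    rfl
  have hnormal : (a - z • 1) * star (a - z • 1) = star (a - z • 1) * (a - z • 1) := by
    rw [hstar]
    simp only [sub_mul, mul_sub, smul_mul_assoc, mul_smul_comm, smul_sub, smul_smul,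
      one_mul, mul_one]
    rw [mul_comm ((starRingEnd ℂ) z) z]
    abel
  refine ⟨hu, aux_inv_bound _ hu hnormal δ hδ ?_⟩
  intro w hw
  rw [← halg, ← spectrum.sub_singleton_eq] at hw
  obtain ⟨v, hv, y, hy, hvy⟩ := Set.mem_sub.mp hw
  rw [Set.mem_singleton_iff] at hy
  subst hy
  have := hz v hv
  rwa [dist_eq_norm, norm_sub_rev, hvy] at this

set_option maxHeartbeats 1000000

lemma main_aux {ι : Type*} [Fintype ι] [DecidableEq ι] [Nonempty ι]
    (Hα Hm : Matrix ι ι ℂ) (hsa : IsSelfAdjoint (Matrix.toEuclideanCLM (𝕜 := ℂ) Hm))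
    (z : ℂ) (δ : ℝ) (hδ : 0 < δ)
    (hz : ∀ w ∈ spectrum ℂ (Matrix.toEuclideanCLM (𝕜 := ℂ) Hm), δ ≤ dist z w)
    (ht : ‖Matrix.toEuclideanCLM (𝕜 := ℂ) Hα - Matrix.toEuclideanCLM (𝕜 := ℂ) Hm‖ ≤ δ / 2) :
    IsUnit (Hm - z • 1) ∧ IsUnit (Hα - z • 1) ∧
      ∀ i j : ι, ‖(Hα - z • 1)⁻¹ i j‖ ≤ 2 / δ := by
  haveI : Nontrivial (EuclideanSpace ℂ ι) := by
    refine ⟨0, EuclideanSpace.single (Classical.arbitrary ι) 1, fun h => ?_⟩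
    have h2 := congrArg (fun v : EuclideanSpace ℂ ι => v (Classical.arbitrary ι)) h
    simp [EuclideanSpace.single_apply] at h2
  set φ := Matrix.toEuclideanCLM (𝕜 := ℂ) (n := ι) with hφdef
  obtain ⟨hu, hbn⟩ := resolvent_bound (φ Hm) hsa z δ hδ hz
  have hφsub : φ Hm - z • 1 = φ (Hm - z • 1) := by
    rw [map_sub, map_smul, map_one]
  have hMU : IsUnit (Hm - z • 1) := by
    have h1 : IsUnit (φ (Hm - z • 1)) := by rwa [← hφsub]
    have h2 := h1.map (Matrix.toEuclideanCLM (𝕜 := ℂ) (n := ι)).symm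
    rwa [show ((Matrix.toEuclideanCLM (𝕜 := ℂ) (n := ι)).symm (φ (Hm - z • 1))) = Hm - z • 1 from
      StarAlgEquiv.symm_apply_apply _ _] at h2
  set t := φ Hα - φ Hm with htdef
  set s := -(Ring.inverse (φ Hm - z • 1) * t) with hsdef
  have hs_half : ‖s‖ ≤ 1 / 2 := by
    rw [hsdef, norm_neg]
    calc ‖Ring.inverse (φ Hm - z • 1) * t‖ ≤ ‖Ring.inverse (φ Hm - z • 1)‖ * ‖t‖ := norm_mul_le _ _
      _ ≤ δ⁻¹ * (δ / 2) := by
          exact mul_le_mul hbn ht (norm_nonneg _) (by positivity)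
      _ = 1 / 2 := by field_simp
  have hs1 : ‖s‖ < 1 := lt_of_le_of_lt hs_half (by norm_num)
  set v := Units.oneSub s hs1 with hvdef
  set u := hu.unit with hudef
  have hUval : ((u * v : _ˣ) : EuclideanSpace ℂ ι →L[ℂ] EuclideanSpace ℂ ι) = φ (Hα - z • 1) := by
    rw [Units.val_mul, hudef, hu.unit_spec, hvdef, Units.val_oneSub, hsdef, sub_neg_eq_add,
      mul_add, mul_one, ← mul_assoc, Ring.mul_inverse_cancel _ hu, one_mul, htdef,
      map_sub, map_smul, map_one]
    abel
  have hWU : IsUnit (Hα - z • 1) := by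
    have h1 : IsUnit (φ (Hα - z • 1)) := ⟨u * v, hUval⟩
    have h2 := h1.map (Matrix.toEuclideanCLM (𝕜 := ℂ) (n := ι)).symm
    rwa [show ((Matrix.toEuclideanCLM (𝕜 := ℂ) (n := ι)).symm (φ (Hα - z • 1))) = Hα - z • 1 from
      StarAlgEquiv.symm_apply_apply _ _] at h2
  refine ⟨hMU, hWU, fun i j => ?_⟩
  have hWdet := (Matrix.isUnit_iff_isUnit_det _).mp hWU
  have hφinv : φ ((Hα - z • 1)⁻¹) = ((u * v)⁻¹ : _ˣ) := by
    have hmul : φ ((Hα - z • 1)⁻¹) * ((u * v : _ˣ) : EuclideanSpace ℂ ι →L[ℂ] EuclideanSpace ℂ ι)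
        = 1 := by
      rw [hUval, ← map_mul, Matrix.nonsing_inv_mul _ hWdet, map_one]
    calc φ ((Hα - z • 1)⁻¹)
        = φ ((Hα - z • 1)⁻¹) * (((u * v : _ˣ) : EuclideanSpace ℂ ι →L[ℂ] EuclideanSpace ℂ ι) *
            ((u * v)⁻¹ : _ˣ)) := by rw [Units.mul_inv, mul_one]
      _ = (φ ((Hα - z • 1)⁻¹) * ((u * v : _ˣ) : EuclideanSpace ℂ ι →L[ℂ] EuclideanSpace ℂ ι)) *
            ((u * v)⁻¹ : _ˣ) := by rw [mul_assoc]
      _ = ((u * v)⁻¹ : _ˣ) := by rw [hmul, one_mul]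
  have hv2 : ‖((v⁻¹ : _ˣ) : EuclideanSpace ℂ ι →L[ℂ] EuclideanSpace ℂ ι)‖ ≤ 2 := by
    have hone : ((v : _ˣ) : EuclideanSpace ℂ ι →L[ℂ] EuclideanSpace ℂ ι) * ((v⁻¹ : _ˣ) : _) = 1 :=
      v.mul_inv
    rw [hvdef, Units.val_oneSub, sub_mul, one_mul] at hone
    have heq := sub_eq_iff_eq_add.mp hone
    have hn : ‖((v⁻¹ : _ˣ) : EuclideanSpace ℂ ι →L[ℂ] EuclideanSpace ℂ ι)‖ ≤
        1 + ‖s‖ * ‖((v⁻¹ : _ˣ) : EuclideanSpace ℂ ι →L[ℂ] EuclideanSpace ℂ ι)‖ := by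
      calc ‖((v⁻¹ : _ˣ) : EuclideanSpace ℂ ι →L[ℂ] EuclideanSpace ℂ ι)‖
          = ‖(1 : EuclideanSpace ℂ ι →L[ℂ] EuclideanSpace ℂ ι) +
              s * ((v⁻¹ : _ˣ) : EuclideanSpace ℂ ι →L[ℂ] EuclideanSpace ℂ ι)‖ := by rw [← heq]
        _ ≤ ‖(1 : EuclideanSpace ℂ ι →L[ℂ] EuclideanSpace ℂ ι)‖ + ‖s * ((v⁻¹ : _ˣ) : _)‖ :=
            norm_add_le _ _
        _ ≤ 1 + ‖s‖ * ‖((v⁻¹ : _ˣ) : EuclideanSpace ℂ ι →L[ℂ] EuclideanSpace ℂ ι)‖ := by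
            rw [norm_one]
            exact add_le_add le_rfl (norm_mul_le _ _)
    nlinarith [norm_nonneg ((v⁻¹ : _ˣ) : EuclideanSpace ℂ ι →L[ℂ] EuclideanSpace ℂ ι), hs_half]
  have huinv : ((u⁻¹ : _ˣ) : EuclideanSpace ℂ ι →L[ℂ] EuclideanSpace ℂ ι) =
      Ring.inverse (φ Hm - z • 1) := by
    conv_rhs => rw [← hu.unit_spec]
    rw [Ring.inverse_unit, hudef]
  have hnorm : ‖φ ((Hα - z • 1)⁻¹)‖ ≤ 2 / δ := by
    rw [hφinv, mul_inv_rev, Units.val_mul]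
    calc ‖((v⁻¹ : _ˣ) : EuclideanSpace ℂ ι →L[ℂ] EuclideanSpace ℂ ι) * ((u⁻¹ : _ˣ) : _)‖
        ≤ ‖((v⁻¹ : _ˣ) : EuclideanSpace ℂ ι →L[ℂ] EuclideanSpace ℂ ι)‖ *
          ‖((u⁻¹ : _ˣ) : EuclideanSpace ℂ ι →L[ℂ] EuclideanSpace ℂ ι)‖ := norm_mul_le _ _
      _ ≤ 2 * δ⁻¹ := by
          refine mul_le_mul hv2 ?_ (norm_nonneg _) (by norm_num)
          rw [huinv]; exact hbn
      _ = 2 / δ := by rw [div_eq_mul_inv]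
  exact (norm_entry_le_clm_norm _ i j).trans hnorm



/-- Combes–Thomas-type exponential decay estimate for resolvents under a
conjugation (commutator) bound. -/
theorem stmt5
    (n S : ℕ) (H : Matrix (Fin n × Fin S) (Fin n × Fin S) ℂ)
    (hH : H.IsHermitian)
    (α₀ C₁ : ℝ) (hα₀ : 0 < α₀) (hα₀1 : α₀ ≤ 1) (hC₁ : 0 < C₁)
    (hconj : ∀ α : ℝ, |α| ≤ α₀ →
      ‖Matrix.toEuclideanCLM (𝕜 := ℂ)
          (Matrix.of fun i j : Fin n × Fin S =>
            (Real.exp (α * (((((i.1 : ℕ) : ℝ) + 1)) - ((((j.1 : ℕ) : ℝ) + 1)))) : ℂ) * H i j) -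
        Matrix.toEuclideanCLM (𝕜 := ℂ) H‖ ≤ C₁ * |α|)
    (z : ℂ) (δ : ℝ) (hδ : 0 < δ)
    (hz : ∀ w ∈ spectrum ℂ H, δ ≤ dist z w) :
    ∀ c : ℝ, 0 < c → c ≤ min α₀ (δ / (2 * C₁)) →
      ∀ (x y : Fin n) (σ ζ : Fin S),
        ‖(H - z • 1)⁻¹ (x, σ) (y, ζ)‖ ≤
          (2 / δ) * Real.exp (-c * |(((x : ℕ) : ℝ) + 1) - (((y : ℕ) : ℝ) + 1)|) := by
  intro c hc hcle x y σ ζ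
  haveI : Nonempty (Fin n × Fin S) := ⟨(x, σ)⟩
  obtain ⟨hcα, hcδ⟩ := le_min_iff.mp hcle
  have hstarH : star H = H := by rw [Matrix.star_eq_conjTranspose]; exact hH
  have hsa : IsSelfAdjoint (Matrix.toEuclideanCLM (𝕜 := ℂ) H) := by
    rw [IsSelfAdjoint, ← map_star, hstarH]
  set α := if ((y : ℕ) : ℝ) + 1 ≤ ((x : ℕ) : ℝ) + 1 then c else -c with hαdef
  have hαabs : |α| = c := by
    rw [hαdef]; split_ifs
    · exact abs_of_pos hc
    · rw [abs_neg]; exact abs_of_pos hc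
  have hαbound : |α| ≤ α₀ := by rw [hαabs]; exact hcα
  have hαexp : α * ((((y : ℕ) : ℝ) + 1) - (((x : ℕ) : ℝ) + 1)) =
      -c * |(((x : ℕ) : ℝ) + 1) - (((y : ℕ) : ℝ) + 1)| := by
    rw [hαdef]; split_ifs with h
    · rw [abs_of_nonneg (by linarith)]; ring
    · push_neg at h
      rw [abs_of_nonpos (by linarith)]; ring
  set Hα := Matrix.of fun i j : Fin n × Fin S =>
      ((Real.exp (α * (((((i.1 : ℕ) : ℝ) + 1)) - ((((j.1 : ℕ) : ℝ) + 1)))) : ℝ) : ℂ) * H i j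
    with hHαdef
  have ht : ‖Matrix.toEuclideanCLM (𝕜 := ℂ) Hα - Matrix.toEuclideanCLM (𝕜 := ℂ) H‖ ≤ δ / 2 := by
    have h1 := hconj α hαbound
    rw [hαabs] at h1
    refine h1.trans ?_
    have h2 : C₁ * c ≤ C₁ * (δ / (2 * C₁)) := mul_le_mul_of_nonneg_left hcδ hC₁.le
    have h3 : C₁ * (δ / (2 * C₁)) = δ / 2 := by field_simp
    linarith
  have hzφ : ∀ w ∈ spectrum ℂ (Matrix.toEuclideanCLM (𝕜 := ℂ) H), δ ≤ dist z w := by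
    intro w hw
    exact hz w (by rwa [AlgEquiv.spectrum_eq] at hw)
  obtain ⟨hMU, hWU, hbound⟩ := main_aux Hα H hsa z δ hδ hzφ ht
  set d : Fin n × Fin S → ℂ := fun i => ((Real.exp (α * (((i.1 : ℕ) : ℝ) + 1)) : ℝ) : ℂ) with hddef
  set e : Fin n × Fin S → ℂ :=
    fun i => ((Real.exp (-(α * (((i.1 : ℕ) : ℝ) + 1))) : ℝ) : ℂ) with hedef
  have hde : ∀ i, d i * e i = 1 := by
    intro i
    rw [hddef, hedef]
    simp only
    rw [← Complex.ofReal_mul, ← Real.exp_add, add_neg_cancel, Real.exp_zero, Complex.ofReal_one]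
  have hed : ∀ i, e i * d i = 1 := fun i => by rw [mul_comm]; exact hde i
  set D := Matrix.diagonal d with hDdef
  set E := Matrix.diagonal e with hEdef
  have hDE : D * E = 1 := by
    rw [hDdef, hEdef, Matrix.diagonal_mul_diagonal,
      show (fun i => d i * e i) = fun _ : Fin n × Fin S => (1 : ℂ) from funext hde,
      Matrix.diagonal_one]
  have hED : E * D = 1 := by
    rw [hDdef, hEdef, Matrix.diagonal_mul_diagonal,
      show (fun i => e i * d i) = fun _ : Fin n × Fin S => (1 : ℂ) from funext hed,
      Matrix.diagonal_one]
  have hsc : ∀ i j : Fin n × Fin S, d i * e j =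
      ((Real.exp (α * (((((i.1 : ℕ) : ℝ) + 1)) - ((((j.1 : ℕ) : ℝ) + 1)))) : ℝ) : ℂ) := by
    intro i j
    rw [hddef, hedef]
    simp only
    rw [← Complex.ofReal_mul, ← Real.exp_add,
      show α * ((((i.1 : ℕ) : ℝ) + 1)) + -(α * ((((j.1 : ℕ) : ℝ) + 1))) =
        α * (((((i.1 : ℕ) : ℝ) + 1)) - ((((j.1 : ℕ) : ℝ) + 1))) from by ring]
  have hfact : Hα = D * H * E := by
    ext i j
    rw [Matrix.mul_diagonal, Matrix.diagonal_mul]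
    show ((Real.exp (α * (((((i.1 : ℕ) : ℝ) + 1)) - ((((j.1 : ℕ) : ℝ) + 1)))) : ℝ) : ℂ) * H i j
      = d i * H i j * e j
    rw [← hsc i j]
    ring
  set M := H - z • (1 : Matrix (Fin n × Fin S) (Fin n × Fin S) ℂ) with hMdef
  have hMdet := (Matrix.isUnit_iff_isUnit_det _).mp hMU
  have hW : Hα - z • 1 = D * M * E := by
    rw [hMdef, mul_sub, sub_mul, hfact, mul_smul_comm, smul_mul_assoc, mul_one, hDE]
  have hWinv : (Hα - z • 1)⁻¹ = D * M⁻¹ * E := by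
    refine Matrix.inv_eq_right_inv ?_
    rw [hW]
    calc D * M * E * (D * M⁻¹ * E) = D * (M * ((E * D) * (M⁻¹ * E))) := by
          simp only [mul_assoc]
      _ = D * (M * (M⁻¹ * E)) := by rw [hED, one_mul]
      _ = D * ((M * M⁻¹) * E) := by simp only [← mul_assoc]
      _ = D * (1 * E) := by rw [Matrix.mul_nonsing_inv _ hMdet]
      _ = 1 := by rw [one_mul, hDE]
  have hMinv : M⁻¹ = E * (Hα - z • 1)⁻¹ * D := by
    rw [hWinv]
    refine Eq.symm ?_
    calc E * (D * M⁻¹ * E) * D = E * (D * (M⁻¹ * (E * D))) := by simp only [mul_assoc]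
      _ = E * (D * (M⁻¹ * 1)) := by rw [hED]
      _ = (E * D) * M⁻¹ := by rw [mul_one]; simp only [← mul_assoc]
      _ = M⁻¹ := by rw [hED, one_mul]
  have hentry : M⁻¹ (x, σ) (y, ζ) = e (x, σ) * (Hα - z • 1)⁻¹ (x, σ) (y, ζ) * d (y, ζ) := by
    rw [hMinv, hDdef, hEdef, Matrix.mul_diagonal, Matrix.diagonal_mul]
  rw [hentry, norm_mul, norm_mul]
  have hne : ‖e (x, σ)‖ = Real.exp (-(α * (((x : ℕ) : ℝ) + 1))) := by
    rw [hedef]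
    simp only
    rw [Complex.norm_real, Real.norm_eq_abs, Real.abs_exp]
  have hnd : ‖d (y, ζ)‖ = Real.exp (α * (((y : ℕ) : ℝ) + 1)) := by
    rw [hddef]
    simp only
    rw [Complex.norm_real, Real.norm_eq_abs, Real.abs_exp]
  rw [hne, hnd]
  have h1 := hbound (x, σ) (y, ζ)
  have hstep : Real.exp (-(α * (((x : ℕ) : ℝ) + 1))) * ‖(Hα - z • 1)⁻¹ (x, σ) (y, ζ)‖ *
      Real.exp (α * (((y : ℕ) : ℝ) + 1)) ≤
      Real.exp (-(α * (((x : ℕ) : ℝ) + 1))) * (2 / δ) * Real.exp (α * (((y : ℕ) : ℝ) + 1)) := by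
    have e1 := (Real.exp_pos (-(α * (((x : ℕ) : ℝ) + 1)))).le
    have e2 := (Real.exp_pos (α * (((y : ℕ) : ℝ) + 1))).le
    exact mul_le_mul_of_nonneg_right (mul_le_mul_of_nonneg_left h1 e1) e2
  refine hstep.trans (le_of_eq ?_)
  rw [show Real.exp (-(α * (((x : ℕ) : ℝ) + 1))) * (2 / δ) * Real.exp (α * (((y : ℕ) : ℝ) + 1)) =
      (2 / δ) * (Real.exp (-(α * (((x : ℕ) : ℝ) + 1))) * Real.exp (α * (((y : ℕ) : ℝ) + 1)))
      from by ring, ← Real.exp_add,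
    show -(α * (((x : ℕ) : ℝ) + 1)) + α * (((y : ℕ) : ℝ) + 1) =
      α * ((((y : ℕ) : ℝ) + 1) - (((x : ℕ) : ℝ) + 1)) from by ring, hαexp]

end
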